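/- (Multiplicative-weights potential lemma.) Let η ≥ 1, Z a type, M : Fin η → Z → ℝ with 0 ≤ M a z ≤ 1 for all a, z, and let 0 < ε < 1. For an event sequence z : Fin T → Z define weights w_a^{(0)} = 1 and w_a^{(k+1)} = w_a^{(k)} · (1−ε)^{M a (z k)}, and let W_k = ∑_{a} w_a^{(k)} and F_k = (∑_a w_a^{(k)} · M a (z k)) / W_k (the weighted average loss at step k, assuming W_k > 0). Then: (i) W_T ≥ (1−ε)^{min_a ∑_{k<T} M a (z k)}, and (ii) W_T ≤ η · ∏_{k<T} (1 − ε · F_k). -/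

import Mathlib

/-- Multiplicative-weights potential lemma. With weights
`w a 0 = 1`, `w a (k+1) = w a k * (1−ε)^(M a (z k))`, total weight
`W k = ∑ a, w a k` and weighted average loss `F k = (∑ a, w a k * M a (z k)) / W k`,
we have `(1−ε)^(min_a ∑_{k<T} M a (z k)) ≤ W T` and
`W T ≤ η * ∏_{k<T} (1 − ε * F k)`. -/
theorem multiplicative_weights_potential
    (η : ℕ) (hη : 1 ≤ η) (Z : Type)
    (M : Fin η → Z → ℝ) (hM : ∀ a z, 0 ≤ M a z ∧ M a z ≤ 1)
    (ε : ℝ) (hε : 0 < ε) (hε' : ε < 1)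
    (T : ℕ) (z : Fin T → Z)
    (w : Fin η → ℕ → ℝ)
    (hw0 : ∀ a, w a 0 = 1)
    (hws : ∀ (a : Fin η) (k : Fin T),
      w a ((k : ℕ) + 1) = w a k * (1 - ε) ^ (M a (z k)))
    (W : ℕ → ℝ) (hW : ∀ k, W k = ∑ a : Fin η, w a k)
    (F : Fin T → ℝ)
    (hF : ∀ k : Fin T, F k = (∑ a : Fin η, w a k * M a (z k)) / W k) :
    (1 - ε) ^ (⨅ a : Fin η, ∑ k : Fin T, M a (z k)) ≤ W T ∧
    W T ≤ (η : ℝ) * ∏ k : Fin T, (1 - ε * F k) := by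
  have hb : (0:ℝ) < 1 - ε := by linarith
  haveI : NeZero η := ⟨by omega⟩
  -- closed form for the weights
  have hwf : ∀ n, n ≤ T → ∀ a, w a n =
      (1 - ε) ^ (∑ k ∈ Finset.univ.filter (fun k : Fin T => (k : ℕ) < n), M a (z k)) := by
    intro n
    induction n with
    | zero =>
      intro _ a
      have : Finset.univ.filter (fun k : Fin T => (k : ℕ) < 0) = ∅ := by
        ext k; simp
      simp [this, hw0, Real.rpow_zero]
    | succ n ih =>
      intro hn a
      have hn' : n < T := hn
      have hset : Finset.univ.filter (fun k : Fin T => (k : ℕ) < n + 1) =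
          insert (⟨n, hn'⟩ : Fin T) (Finset.univ.filter (fun k : Fin T => (k : ℕ) < n)) := by
        ext k
        simp [Nat.lt_succ_iff_lt_or_eq, Fin.ext_iff]
        omega
      have hnotmem : (⟨n, hn'⟩ : Fin T) ∉
          Finset.univ.filter (fun k : Fin T => (k : ℕ) < n) := by simp
      have hrec := hws a ⟨n, hn'⟩
      simp only [Fin.val_mk] at hrec
      rw [hrec, ih (le_of_lt hn') a, hset, Finset.sum_insert hnotmem,
        Real.rpow_add hb, mul_comm]
  -- positivity of weights
  have hwpos : ∀ n, n ≤ T → ∀ a, 0 < w a n := by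
    intro n hn a
    rw [hwf n hn a]
    exact Real.rpow_pos_of_pos hb _
  have hWpos : ∀ n, n ≤ T → 0 < W n := by
    intro n hn
    rw [hW]
    exact Finset.sum_pos (fun a _ => hwpos n hn a) Finset.univ_nonempty
  constructor
  · -- part (i)
    obtain ⟨a₀, ha₀⟩ := Finite.exists_min (fun a : Fin η => ∑ k : Fin T, M a (z k))
    have hinf : (⨅ a : Fin η, ∑ k : Fin T, M a (z k)) = ∑ k : Fin T, M a₀ (z k) := by
      refine le_antisymm (ciInf_le (Finite.bddBelow_range _) a₀) (le_ciInf ha₀)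
    have hfull : Finset.univ.filter (fun k : Fin T => (k : ℕ) < T) =
        (Finset.univ : Finset (Fin T)) := by
      ext k; simp [k.isLt]
    have hwT : w a₀ T = (1 - ε) ^ (∑ k : Fin T, M a₀ (z k)) := by
      rw [hwf T le_rfl a₀, hfull]
    rw [hinf, ← hwT, hW]
    exact Finset.single_le_sum (fun a _ => (hwpos T le_rfl a).le) (Finset.mem_univ a₀)
  · -- part (ii)
    have key : ∀ n, n ≤ T → W n ≤ (η : ℝ) *
        ∏ k ∈ Finset.univ.filter (fun k : Fin T => (k : ℕ) < n), (1 - ε * F k) := by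
      intro n
      induction n with
      | zero =>
        intro _
        have : Finset.univ.filter (fun k : Fin T => (k : ℕ) < 0) = ∅ := by ext k; simp
        simp [this, hW, hw0]
      | succ n ih =>
        intro hn
        have hn' : n < T := hn
        set kn : Fin T := ⟨n, hn'⟩
        have hWn := hWpos n (le_of_lt hn')
        -- F kn ∈ [0,1]
        have hsum_le : (∑ a : Fin η, w a n * M a (z kn)) ≤ W n := by
          rw [hW]
          refine Finset.sum_le_sum fun a _ => ?_
          have := hwpos n (le_of_lt hn') a
          nlinarith [(hM a (z kn)).2]
        have hsum_nonneg : 0 ≤ ∑ a : Fin η, w a n * M a (z kn) :=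
          Finset.sum_nonneg fun a _ =>
            mul_nonneg (hwpos n (le_of_lt hn') a).le (hM a (z kn)).1
        have hF0 : 0 ≤ F kn := by rw [hF]; positivity
        have hF1 : F kn ≤ 1 := by
          rw [hF]; exact div_le_one_of_le₀ hsum_le hWn.le
        have hc : 0 ≤ 1 - ε * F kn := by nlinarith
        -- step inequality
        have hstep : W (n + 1) ≤ W n * (1 - ε * F kn) := by
          have hWn1 : W (n + 1) = ∑ a : Fin η, w a n * (1 - ε) ^ (M a (z kn)) := by
            rw [hW]
            refine Finset.sum_congr rfl fun a _ => ?_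
            have := hws a kn
            simpa using this
          have hle : W (n + 1) ≤ ∑ a : Fin η, w a n * (1 - ε * M a (z kn)) := by
            rw [hWn1]
            refine Finset.sum_le_sum fun a _ => ?_
            refine mul_le_mul_of_nonneg_left ?_ (hwpos n (le_of_lt hn') a).le
            have hbern := rpow_one_add_le_one_add_mul_self (s := -ε) (p := M a (z kn))
              (by linarith) (hM a (z kn)).1 (hM a (z kn)).2
            have : (1 + -ε) = 1 - ε := by ring
            rw [this] at hbern
            linarith [hbern]
          have heq : (∑ a : Fin η, w a n * (1 - ε * M a (z kn)))
              = W n - ε * ∑ a : Fin η, w a n * M a (z kn) := by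
            rw [hW, Finset.mul_sum, ← Finset.sum_sub_distrib]
            exact Finset.sum_congr rfl fun a _ => by ring
          have heq2 : W n * (1 - ε * F kn)
              = W n - ε * ∑ a : Fin η, w a n * M a (z kn) := by
            rw [hF]
            have hWkn : W (kn : ℕ) = W n := rfl
            rw [hWkn]
            field_simp
            rfl
          linarith
        have hset : Finset.univ.filter (fun k : Fin T => (k : ℕ) < n + 1) =
            insert kn (Finset.univ.filter (fun k : Fin T => (k : ℕ) < n)) := by
          ext k
          simp [Nat.lt_succ_iff_lt_or_eq, Fin.ext_iff, kn]
          omega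
        have hnotmem : kn ∉ Finset.univ.filter (fun k : Fin T => (k : ℕ) < n) := by
          simp [kn]
        rw [hset, Finset.prod_insert hnotmem]
        calc W (n + 1) ≤ W n * (1 - ε * F kn) := hstep
          _ ≤ ((η : ℝ) * ∏ k ∈ Finset.univ.filter (fun k : Fin T => (k : ℕ) < n),
                (1 - ε * F k)) * (1 - ε * F kn) :=
              mul_le_mul_of_nonneg_right (ih (le_of_lt hn')) hc
          _ = (η : ℝ) * ((1 - ε * F kn) *
                ∏ k ∈ Finset.univ.filter (fun k : Fin T => (k : ℕ) < n), (1 - ε * F k)) := by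
              ring
    have hfull : Finset.univ.filter (fun k : Fin T => (k : ℕ) < T) =
        (Finset.univ : Finset (Fin T)) := by
      ext k; simp [k.isLt]
    have := key T le_rfl
    rwa [hfull] at this
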